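/- Let I be a real interval, f : I → ℝ convex, (x_1, …, x_m) self-adjoint n×n complex matrices with spectra in I, and (a_1, …, a_m) n×n matrices with ∑_{k=1}^m a_k* a_k = 1. Set y = ∑_{k=1}^m a_k* x_k a_k. Then for every unit vector ξ ∈ ℂⁿ that is an eigenvector of y, one has ( f(y) ξ | ξ ) ≤ ∑_{k=1}^m ( a_k* f(x_k) a_k ξ | ξ ). -/

import Mathlib

open scoped ComplexOrder Matrix
open Matrix

private lemma quad_form {n : ℕ} {A : Matrix (Fin n) (Fin n) ℂ} (hA : A.IsHermitian) (g : ℝ → ℝ)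
    (η : Fin n → ℂ) :
    star η ⬝ᵥ (hA.cfc g) *ᵥ η =
      ((∑ i, g (hA.eigenvalues i) *
        Complex.normSq ((star (hA.eigenvectorUnitary : Matrix (Fin n) (Fin n) ℂ) *ᵥ η) i) : ℝ) : ℂ) := by
  set V := (hA.eigenvectorUnitary : Matrix (Fin n) (Fin n) ℂ) with hV
  set ζ := star V *ᵥ η with hζ
  have h1 : star η ᵥ* V = star ζ := by
    rw [hζ, star_mulVec, star_eq_conjTranspose, conjTranspose_conjTranspose]
  rw [Matrix.IsHermitian.cfc, Unitary.conjStarAlgAut_apply, ← mulVec_mulVec, ← mulVec_mulVec, dotProduct_mulVec, h1]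
  simp only [dotProduct, mulVec_diagonal, Pi.star_apply, Function.comp_apply,
    Complex.ofReal_sum, Complex.ofReal_mul]
  refine Finset.sum_congr rfl fun i _ => ?_
  have hi : (star (hA.eigenvectorUnitary : Matrix (Fin n) (Fin n) ℂ) *ᵥ η) i = ζ i := rfl
  rw [hi, RCLike.star_def, mul_left_comm, ← Complex.normSq_eq_conj_mul_self]
  rfl

private lemma cfc_id'' {n : ℕ} {A : Matrix (Fin n) (Fin n) ℂ} (hA : A.IsHermitian) :
    hA.cfc (fun r => r) = A := by
  rw [Matrix.IsHermitian.cfc]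
  exact hA.spectral_theorem.symm

private lemma cfc_one'' {n : ℕ} {A : Matrix (Fin n) (Fin n) ℂ} (hA : A.IsHermitian) :
    hA.cfc (fun _ => (1 : ℝ)) = 1 := by
  rw [Matrix.IsHermitian.cfc]
  have h : Matrix.diagonal (RCLike.ofReal ∘ (fun _ => (1 : ℝ)) ∘ hA.eigenvalues) =
      (1 : Matrix (Fin n) (Fin n) ℂ) := by
    simp [Function.comp_def]
  rw [h, Unitary.conjStarAlgAut_apply, mul_one]
  exact Matrix.mem_unitaryGroup_iff.mp hA.eigenvectorUnitary.2

private lemma conj_quad {n : ℕ} (a M : Matrix (Fin n) (Fin n) ℂ) (ξ : Fin n → ℂ) :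
    star ξ ⬝ᵥ (aᴴ * M * a) *ᵥ ξ = star (a *ᵥ ξ) ⬝ᵥ M *ᵥ (a *ᵥ ξ) := by
  rw [star_mulVec, ← mulVec_mulVec, ← mulVec_mulVec, dotProduct_mulVec]

private lemma sum_quad {n m : ℕ} (M : Fin m → Matrix (Fin n) (Fin n) ℂ) (ξ : Fin n → ℂ) :
    star ξ ⬝ᵥ (∑ k, M k) *ᵥ ξ = ∑ k, star ξ ⬝ᵥ (M k) *ᵥ ξ := by
  classical
  induction (Finset.univ : Finset (Fin m)) using Finset.induction_on with
  | empty => simp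
  | insert _ _ h ih => simp [Finset.sum_insert h, add_mulVec, dotProduct_add, ih]

/-- If `f` is convex on an interval `I`, the `x k` are Hermitian `n × n` matrices with
spectra in `I`, `(a 1, …, a m)` is a unital column (`∑ k, (a k)ᴴ * a k = 1`), and
`y = ∑ k, (a k)ᴴ * x k * a k`, then for every unit vector `ξ` which is an eigenvector
of `y` one has `(f(y) ξ | ξ) ≤ ∑ k ((a k)ᴴ f(x k) (a k) ξ | ξ)`.  Here
`(u | ξ) = star ξ ⬝ᵥ u` is the inner product on `ℂⁿ` (linear in the first variable). -/
theorem jensen_eigenvector_inequality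
    (I : Set ℝ) (hI : I.OrdConnected) (f : ℝ → ℝ) (hf : ConvexOn ℝ I f)
    (n m : ℕ) (x a : Fin m → Matrix (Fin n) (Fin n) ℂ)
    (hx : ∀ k, (x k).IsHermitian)
    (hspec : ∀ k, spectrum ℝ (x k) ⊆ I)
    (ha : ∑ k, (a k)ᴴ * a k = 1)
    (y : Matrix (Fin n) (Fin n) ℂ) (hy_def : y = ∑ k, (a k)ᴴ * x k * a k)
    (hy : y.IsHermitian)
    (ξ : Fin n → ℂ) (hξ : star ξ ⬝ᵥ ξ = 1)
    (heig : ∃ c : ℂ, y.mulVec ξ = c • ξ) :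
    star ξ ⬝ᵥ (hy.cfc f).mulVec ξ ≤
      ∑ k, star ξ ⬝ᵥ ((a k)ᴴ * (hx k).cfc f * a k).mulVec ξ := by
  classical
  obtain ⟨c, hc⟩ := heig
  set V := (hy.eigenvectorUnitary : Matrix (Fin n) (Fin n) ℂ) with hV
  set μ := hy.eigenvalues with hμ
  set ζ := star V *ᵥ ξ with hζ
  set w : Fin n → ℝ := fun i => Complex.normSq (ζ i) with hw
  -- weights for each k
  set η : Fin m → (Fin n → ℂ) := fun k => a k *ᵥ ξ with hη
  set u : Fin m → Fin n → ℝ := fun k i =>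
    Complex.normSq ((star ((hx k).eigenvectorUnitary : Matrix (Fin n) (Fin n) ℂ) *ᵥ η k) i) with hu
  -- normalization of w
  have hw_sum : ∑ i, w i = 1 := by
    have h1 := quad_form hy (fun _ => (1 : ℝ)) ξ
    rw [cfc_one'' hy, one_mulVec, hξ] at h1
    have := h1.symm
    simp only [one_mul] at this
    exact_mod_cast this
  -- ⟨yξ, ξ⟩ two ways
  have hyq : star ξ ⬝ᵥ y *ᵥ ξ = ((∑ i, μ i * w i : ℝ) : ℂ) := by
    have := quad_form hy (fun r => r) ξ
    rwa [cfc_id'' hy] at this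
  have hcval : c = ((∑ i, μ i * w i : ℝ) : ℂ) := by
    rw [← hyq, hc, dotProduct_smul, hξ, smul_eq_mul, mul_one]
  set S : ℝ := ∑ i, μ i * w i with hS
  -- eigen-equation in the diagonal basis
  have hDζ : ∀ i, (μ i : ℂ) * ζ i = c * ζ i := by
    intro i
    have h1 : star V *ᵥ (y *ᵥ ξ) = (Matrix.diagonal (RCLike.ofReal ∘ μ)) *ᵥ ζ := by
      conv_lhs => rw [hy.spectral_theorem]
      rw [Unitary.conjStarAlgAut_apply, ← hV, mulVec_mulVec, mulVec_mulVec, ← mul_assoc, ← mul_assoc,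
        Matrix.mem_unitaryGroup_iff'.mp hy.eigenvectorUnitary.2, one_mul, ← mulVec_mulVec]
    have h2 : star V *ᵥ (y *ᵥ ξ) = c • ζ := by rw [hc, mulVec_smul]
    have := h1.symm.trans h2
    have hi := congrFun this i
    simpa [mulVec_diagonal] using hi
  -- LHS equals f S
  have hLHS : star ξ ⬝ᵥ (hy.cfc f) *ᵥ ξ = ((f S : ℝ) : ℂ) := by
    rw [quad_form hy f ξ]
    norm_cast
    have : ∀ i, f (μ i) * w i = f S * w i := by
      intro i
      rcases eq_or_ne (w i) 0 with h0 | h0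
      · rw [h0, mul_zero, mul_zero]
      · have hζi : ζ i ≠ 0 := fun h => h0 (by simp [hw, h])
        have : (μ i : ℂ) = c := mul_right_cancel₀ hζi (hDζ i)
        have : (μ i : ℂ) = ((S : ℝ) : ℂ) := by rw [this, hcval]
        rw [Complex.ofReal_inj.mp this]
    calc ∑ i, f (μ i) * w i = ∑ i, f S * w i := Finset.sum_congr rfl fun i _ => this i
      _ = f S * ∑ i, w i := by rw [Finset.mul_sum]
      _ = f S := by rw [hw_sum, mul_one]
  -- each RHS term
  have hRHSk : ∀ k, star ξ ⬝ᵥ ((a k)ᴴ * (hx k).cfc f * a k) *ᵥ ξ =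
      ((∑ i, f ((hx k).eigenvalues i) * u k i : ℝ) : ℂ) := by
    intro k
    rw [conj_quad, quad_form (hx k) f (η k)]
  have hxk : ∀ k, star ξ ⬝ᵥ ((a k)ᴴ * x k * a k) *ᵥ ξ =
      ((∑ i, (hx k).eigenvalues i * u k i : ℝ) : ℂ) := by
    intro k
    have h2 := quad_form (hx k) (fun r => r) (η k)
    rw [cfc_id'' (hx k)] at h2
    rw [conj_quad]
    exact h2
  have honek : ∀ k, star ξ ⬝ᵥ ((a k)ᴴ * a k) *ᵥ ξ = ((∑ i, u k i : ℝ) : ℂ) := by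
    intro k
    have : (a k)ᴴ * a k = (a k)ᴴ * (1 : Matrix (Fin n) (Fin n) ℂ) * a k := by rw [mul_one]
    have h2 := quad_form (hx k) (fun _ => (1 : ℝ)) (η k)
    rw [cfc_one'' (hx k)] at h2
    rw [this, conj_quad, h2]
    norm_cast
    exact Finset.sum_congr rfl fun i _ => (one_mul _)
  -- total weight
  have hu_sum : ∑ k, ∑ i, u k i = 1 := by
    have h1 : star ξ ⬝ᵥ (∑ k, (a k)ᴴ * a k) *ᵥ ξ = 1 := by rw [ha, one_mulVec, hξ]
    rw [sum_quad] at h1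
    simp only [honek] at h1
    exact_mod_cast (by push_cast at h1 ⊢; exact h1 : ((∑ k, ∑ i, u k i : ℝ) : ℂ) = 1)
  -- S as double sum
  have hST : S = ∑ k, ∑ i, (hx k).eigenvalues i * u k i := by
    have h1 : star ξ ⬝ᵥ y *ᵥ ξ = ((∑ k, ∑ i, (hx k).eigenvalues i * u k i : ℝ) : ℂ) := by
      rw [hy_def, sum_quad]
      simp only [hxk]
      push_cast
      rfl
    rw [hyq] at h1
    exact_mod_cast h1
  -- Jensen
  have hJ : f S ≤ ∑ k, ∑ i, f ((hx k).eigenvalues i) * u k i := by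
    have := hf.map_sum_le (t := (Finset.univ : Finset (Fin m × Fin n)))
      (w := fun p => u p.1 p.2) (p := fun p => (hx p.1).eigenvalues p.2)
      (fun p _ => Complex.normSq_nonneg _)
      (by rw [← hu_sum, ← Finset.sum_product']; rfl)
      (fun p _ => hspec p.1 ((hx p.1).eigenvalues_mem_spectrum_real p.2))
    have hS' : ∑ p : Fin m × Fin n, u p.1 p.2 • (hx p.1).eigenvalues p.2 = S := by
      rw [hST, ← Finset.sum_product']
      exact Finset.sum_congr rfl fun p _ => by rw [smul_eq_mul, mul_comm]
    rw [hS'] at this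
    refine this.trans_eq ?_
    rw [← Finset.sum_product']
    exact Finset.sum_congr rfl fun p _ => by rw [smul_eq_mul, mul_comm]
  -- conclude
  calc star ξ ⬝ᵥ (hy.cfc f) *ᵥ ξ = ((f S : ℝ) : ℂ) := hLHS
    _ ≤ ((∑ k, ∑ i, f ((hx k).eigenvalues i) * u k i : ℝ) : ℂ) := by
        exact_mod_cast Complex.real_le_real.mpr hJ
    _ = ∑ k, star ξ ⬝ᵥ ((a k)ᴴ * (hx k).cfc f * a k) *ᵥ ξ := by
        simp only [hRHSk]; push_cast; rfl
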